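/- (Separation of filtering and matching.) Let λ ∈ (0,1), β² > 0, δ ∈ (0,1), and let C : [0,1) → [0,∞) be convex, nondecreasing, with C(0) = 0 and C(η) → +∞ as η → 1⁻. Let Ψ and Φ be the transition function and the invariant map, and V(r) = sup_{η∈[0,1)}(η r² − C(η)). Fix r₀ ∈ (0,1). For any sequences K_t > 0, σ_t > 0, η_t ∈ [0,1) (t ≥ 0) with induced states r_{t+1} = Ψ(r_t, K_t, η_t, σ_t), the discounted welfare satisfies Σ_{t≥0} δ^t (η_t r_t² − C(η_t)) ≤ Σ_{t≥0} δ^t V(r̄_t), where r̄₀ = r₀ and r̄_{t+1} = Φ(r̄_t). Moreover this upper bound is attained by the separated policy K_t = (1−r̄_t²)/(2(1−r̄_t²)+β²), σ_t = r̄_t, and η_t any maximizer of η ↦ η r̄_t² − C(η) over [0,1). -/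

import Mathlib

/-- The pre-scaling variance `Λ²(r,K,η,σ)` of the rating update
(observation-noise standard deviation `β`). -/
noncomputable def Lam2 (β r K η σ : ℝ) : ℝ :=
  σ ^ 2 * ((1 - K) ^ 2 + K ^ 2 + 2 * K * (1 - K) * η)
    + K ^ 2 * (β ^ 2 + 2 * (1 - η * r ^ 2))
    + 2 * K * (1 - K) * (1 - η) * r * σ
    - 2 * K ^ 2 * (1 - η) * r * σ

/-- The one-step accuracy transition function
`Ψ(r,K,η,σ) = λ[rσ(1 − K(1−η)) + K(1 − ηr²)]/√(Λ²(r,K,η,σ))`. -/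
noncomputable def Psi (lam β r K η σ : ℝ) : ℝ :=
  lam * (r * σ * (1 - K * (1 - η)) + K * (1 - η * r ^ 2))
    / Real.sqrt (Lam2 β r K η σ)

/-- The invariant one-step accuracy map
`Φ(r) = λ√(r² + (1−r²)²/(β² + 2(1−r²)))`. -/
noncomputable def Phi (lam β r : ℝ) : ℝ :=
  lam * Real.sqrt (r ^ 2 + (1 - r ^ 2) ^ 2 / (β ^ 2 + 2 * (1 - r ^ 2)))

/-- Cauchy–Schwarz in dimension 5, via the Lagrange identity. -/
lemma cs5 (a1 a2 a3 a4 a5 b1 b2 b3 b4 b5 : ℝ) :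
    (a1*b1 + a2*b2 + a3*b3 + a4*b4 + a5*b5)^2
      ≤ (a1^2 + a2^2 + a3^2 + a4^2 + a5^2) * (b1^2 + b2^2 + b3^2 + b4^2 + b5^2) := by
  nlinarith [sq_nonneg (a1*b2 - a2*b1), sq_nonneg (a1*b3 - a3*b1), sq_nonneg (a1*b4 - a4*b1),
    sq_nonneg (a1*b5 - a5*b1), sq_nonneg (a2*b3 - a3*b2), sq_nonneg (a2*b4 - a4*b2),
    sq_nonneg (a2*b5 - a5*b2), sq_nonneg (a3*b4 - a4*b3), sq_nonneg (a3*b5 - a5*b3),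
    sq_nonneg (a4*b5 - a5*b4)]

/-- `Λ²` as a sum of five squares (Gaussian representation). -/
lemma lam2_eq_sq (β r K η σ q m : ℝ) (hq : q^2 = 1 - r^2) (hm : m^2 = 1 - η^2) :
    Lam2 β r K η σ
      = ((1-K)*σ + K*σ*η + K*r*(1-η))^2 + (K*q)^2 + (K*(σ-r)*m)^2
        + (-(K*q))^2 + (K*β)^2 := by
  simp only [Lam2]
  linear_combination (-2*K^2) * hq + (-(K^2*(σ-r)^2)) * hm

/-- Key inequality: the squared numerator of `Ψ` is bounded by `Λ²` times the
square of the inside of `Φ` (Cauchy–Schwarz). -/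
lemma key_bound (β r K η σ : ℝ) (hβ : 0 < β^2) (hr : r^2 ≤ 1) (hη : η^2 ≤ 1) :
    (r * σ * (1 - K * (1 - η)) + K * (1 - η * r ^ 2))^2
      ≤ Lam2 β r K η σ * (r ^ 2 + (1 - r ^ 2) ^ 2 / (β ^ 2 + 2 * (1 - r ^ 2))) := by
  have hD : 0 < β^2 + 2*(1-r^2) := by nlinarith
  set q := Real.sqrt (1 - r^2) with hqdef
  set m := Real.sqrt (1 - η^2) with hmdef
  have hq : q^2 = 1 - r^2 := Real.sq_sqrt (by linarith)
  have hm : m^2 = 1 - η^2 := Real.sq_sqrt (by linarith)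
  set c := (1-r^2)/(β^2 + 2*(1-r^2)) with hc
  have hcD : c * (β^2 + 2*(1-r^2)) = 1 - r^2 := by
    rw [hc]; exact div_mul_cancel₀ _ hD.ne'
  set A1 := (1-K)*σ + K*σ*η + K*r*(1-η) with hA1
  have e1 : Lam2 β r K η σ
      = A1^2 + (K*q)^2 + (K*(σ-r)*m)^2 + (-(K*q))^2 + (K*β)^2 :=
    lam2_eq_sq β r K η σ q m hq hm
  have e2 : r ^ 2 + (1 - r ^ 2) ^ 2 / (β ^ 2 + 2 * (1 - r ^ 2))
      = r^2 + (c*q)^2 + 0^2 + (-(c*q))^2 + (c*β)^2 := by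
    have h1 : (c*q)^2 + 0^2 + (-(c*q))^2 + (c*β)^2 = c * (c * (β^2 + 2*(1-r^2))) := by
      linear_combination (2*c^2) * hq
    have h2 : (1 - r ^ 2) ^ 2 / (β ^ 2 + 2 * (1 - r ^ 2)) = c * (c * (β^2 + 2*(1-r^2))) := by
      rw [hc]; field_simp
    linarith [h1, h2]
  have e3 : r * σ * (1 - K * (1 - η)) + K * (1 - η * r ^ 2)
      = A1*r + (K*q)*(c*q) + (K*(σ-r)*m)*0 + (-(K*q))*(-(c*q)) + (K*β)*(c*β) := by
    linear_combination (-2*K*c) * hq + (-K) * hcD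
  rw [e3, e1, e2]
  exact cs5 A1 (K*q) (K*(σ-r)*m) (-(K*q)) (K*β) r (c*q) 0 (-(c*q)) (c*β)

/-- Positivity of `Λ²` for admissible controls. -/
lemma lam2_pos (β r K η σ : ℝ) (hβ : 0 < β^2) (hK : 0 < K)
    (hr : r^2 ≤ 1) (hη : η^2 ≤ 1) : 0 < Lam2 β r K η σ := by
  set q := Real.sqrt (1 - r^2) with hqdef
  set m := Real.sqrt (1 - η^2) with hmdef
  have hq : q^2 = 1 - r^2 := Real.sq_sqrt (by linarith)
  have hm : m^2 = 1 - η^2 := Real.sq_sqrt (by linarith)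
  rw [lam2_eq_sq β r K η σ q m hq hm]
  have : 0 < (K*β)^2 := by rw [mul_pow]; exact mul_pos (pow_pos hK 2) hβ
  nlinarith [sq_nonneg ((1-K)*σ + K*σ*η + K*r*(1-η)), sq_nonneg (K*q), sq_nonneg (K*(σ-r)*m)]

/-- The invariance bound `|Ψ| ≤ Φ`. -/
lemma psi_le_phi (lam β r K η σ : ℝ) (hlam : 0 ≤ lam) (hβ : 0 < β^2)
    (hK : 0 < K) (hr : r^2 ≤ 1) (hη0 : 0 ≤ η) (hη1 : η ≤ 1) :
    |Psi lam β r K η σ| ≤ Phi lam β r := by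
  have hη2 : η^2 ≤ 1 := by nlinarith
  have hΛ : 0 < Lam2 β r K η σ := lam2_pos β r K η σ hβ hK hr hη2
  have hs : 0 < Real.sqrt (Lam2 β r K η σ) := Real.sqrt_pos.mpr hΛ
  have key := key_bound β r K η σ hβ hr hη2
  have hD : 0 < β^2 + 2*(1-r^2) := by nlinarith
  have hXnn : 0 ≤ r ^ 2 + (1 - r ^ 2) ^ 2 / (β ^ 2 + 2 * (1 - r ^ 2)) := by
    have : 0 ≤ (1 - r ^ 2) ^ 2 / (β ^ 2 + 2 * (1 - r ^ 2)) := div_nonneg (sq_nonneg _) hD.le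
    nlinarith [sq_nonneg r]
  set X := r ^ 2 + (1 - r ^ 2) ^ 2 / (β ^ 2 + 2 * (1 - r ^ 2)) with hX
  have hNle : |r * σ * (1 - K * (1 - η)) + K * (1 - η * r ^ 2)|
      ≤ Real.sqrt (Lam2 β r K η σ) * Real.sqrt X := by
    rw [← Real.sqrt_sq_eq_abs, ← Real.sqrt_mul hΛ.le]
    exact Real.sqrt_le_sqrt key
  rw [Psi, Phi, abs_div, abs_mul, abs_of_nonneg hlam,
    abs_of_nonneg (Real.sqrt_nonneg _), div_le_iff₀ hs]
  calc lam * |r * σ * (1 - K * (1 - η)) + K * (1 - η * r ^ 2)|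
      ≤ lam * (Real.sqrt (Lam2 β r K η σ) * Real.sqrt X) :=
        mul_le_mul_of_nonneg_left hNle hlam
    _ = lam * Real.sqrt X * Real.sqrt (Lam2 β r K η σ) := by ring

/-- Monotonicity of `Φ` in `|r|`. -/
lemma phi_mono (lam β a b : ℝ) (hlam : 0 ≤ lam) (hβ : 0 < β^2)
    (hab : a^2 ≤ b^2) (hb : b^2 ≤ 1) :
    Phi lam β a ≤ Phi lam β b := by
  unfold Phi
  have h1 : 0 < β^2 + 2*(1-a^2) := by nlinarith
  have h2 : 0 < β^2 + 2*(1-b^2) := by nlinarith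
  refine mul_le_mul_of_nonneg_left (Real.sqrt_le_sqrt ?_) hlam
  have hkey : b ^ 2 + (1 - b ^ 2) ^ 2 / (β ^ 2 + 2 * (1 - b ^ 2))
      - (a ^ 2 + (1 - a ^ 2) ^ 2 / (β ^ 2 + 2 * (1 - a ^ 2)))
      = ((b^2 - a^2) * (β^4 + β^2*((1-a^2) + (1-b^2)) + 2*(1-a^2)*(1-b^2)))
        / ((β^2 + 2*(1-a^2)) * (β^2 + 2*(1-b^2))) := by
    generalize hDa : β^2 + 2*(1-a^2) = Da at h1 ⊢
    generalize hDb : β^2 + 2*(1-b^2) = Db at h2 ⊢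
    field_simp
    rw [← hDa, ← hDb]
    ring
  have hnum : 0 ≤ (b^2 - a^2) * (β^4 + β^2*((1-a^2) + (1-b^2)) + 2*(1-a^2)*(1-b^2)) := by
    have h3 : (0:ℝ) ≤ β^4 := by positivity
    have : 0 ≤ β^2*((1-a^2) + (1-b^2)) := by nlinarith
    have : 0 ≤ 2*(1-a^2)*(1-b^2) := by nlinarith
    nlinarith
  have : 0 ≤ ((b^2 - a^2) * (β^4 + β^2*((1-a^2) + (1-b^2)) + 2*(1-a^2)*(1-b^2)))
        / ((β^2 + 2*(1-a^2)) * (β^2 + 2*(1-b^2))) :=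
    div_nonneg hnum (by positivity)
  linarith [hkey ▸ this]

/-- `Φ` maps `(0,1)` into `(0,1)`. -/
lemma phi_mem (lam β r : ℝ) (hlam0 : 0 < lam) (hlam1 : lam < 1) (hβ : 0 < β^2)
    (hr0 : 0 < r) (hr1 : r < 1) :
    0 < Phi lam β r ∧ Phi lam β r < 1 := by
  have hD : 0 < β^2 + 2*(1-r^2) := by nlinarith
  have hXpos : 0 < r ^ 2 + (1 - r ^ 2) ^ 2 / (β ^ 2 + 2 * (1 - r ^ 2)) := by
    have : 0 ≤ (1 - r ^ 2) ^ 2 / (β ^ 2 + 2 * (1 - r ^ 2)) := by positivity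
    nlinarith
  have hXle : r ^ 2 + (1 - r ^ 2) ^ 2 / (β ^ 2 + 2 * (1 - r ^ 2)) ≤ 1 := by
    have h1 : (1 - r ^ 2) ^ 2 / (β ^ 2 + 2 * (1 - r ^ 2)) ≤ 1 - r^2 := by
      rw [div_le_iff₀ hD]
      have h2 : (0:ℝ) ≤ 1 - r^2 := by nlinarith
      nlinarith [mul_nonneg h2 hβ.le, sq_nonneg (1 - r^2)]
    linarith
  constructor
  · exact mul_pos hlam0 (Real.sqrt_pos.mpr hXpos)
  · have : Real.sqrt (r ^ 2 + (1 - r ^ 2) ^ 2 / (β ^ 2 + 2 * (1 - r ^ 2))) ≤ 1 := by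
      exact Real.sqrt_le_one.mpr hXle
    calc Phi lam β r ≤ lam * 1 := mul_le_mul_of_nonneg_left this hlam0.le
      _ < 1 := by linarith

/-- The separated policy achieves the invariant map exactly. -/
lemma psi_sep (lam β r η : ℝ) (hβ : 0 < β^2) (hr0 : 0 < r) (hr1 : r < 1) :
    Psi lam β r ((1 - r^2) / (2*(1-r^2) + β^2)) η r = Phi lam β r := by
  have hD : 0 < 2*(1-r^2) + β^2 := by nlinarith
  have hD' : 0 < β^2 + 2*(1-r^2) := by nlinarith
  set K := (1 - r^2) / (2*(1-r^2) + β^2) with hK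
  have hXpos' : 0 < r ^ 2 + (1 - r ^ 2) ^ 2 / (β ^ 2 + 2 * (1 - r ^ 2)) := by
    have : 0 ≤ (1 - r ^ 2) ^ 2 / (β ^ 2 + 2 * (1 - r ^ 2)) := div_nonneg (sq_nonneg _) hD'.le
    nlinarith
  set X := r ^ 2 + (1 - r ^ 2) ^ 2 / (β ^ 2 + 2 * (1 - r ^ 2)) with hX
  have hXpos : 0 < X := hXpos'
  have hN : r * r * (1 - K * (1 - η)) + K * (1 - η * r ^ 2) = X := by
    rw [hK, hX]
    field_simp
    ring
  have hΛ : Lam2 β r K η r = X := by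
    rw [hK, hX, Lam2]
    rw [show β ^ 2 + 2 * (1 - r ^ 2) = 2*(1-r^2) + β^2 by ring]
    generalize hE : 2*(1-r^2) + β^2 = E at hD ⊢
    field_simp
    rw [← hE]
    ring
  rw [Psi, hΛ, hN, Phi, mul_div_assoc, Real.div_sqrt]

/-- **Separation of filtering and matching.** With `Ψ` the
transition function, `Φ` the invariant map, `C` a convex nondecreasing
sorting cost with `C(0) = 0`, `C ≥ 0` and `C(η) → ∞` as `η → 1⁻`, and
`V(r) = sup_{η ∈ [0,1)} (ηr² − C(η))`: for any admissible control sequences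
`K_t > 0`, `σ_t > 0`, `η_t ∈ [0,1)` with induced states
`r_{t+1} = Ψ(r_t, K_t, η_t, σ_t)` started at `r₀ ∈ (0,1)`, the discounted
welfare is at most `Σ δᵗ V(r̄_t)` where `r̄₀ = r₀`, `r̄_{t+1} = Φ(r̄_t)`;
and this bound is attained by the separated policy
`K_t = (1−r̄_t²)/(2(1−r̄_t²)+β²)`, `σ_t = r̄_t`, `η_t` any maximizer of
`η ↦ ηr̄_t² − C(η)`. -/
theorem separation_of_filtering_and_matching
    (lam β δ r0 : ℝ) (C : ℝ → ℝ)
    (hlam0 : 0 < lam) (hlam1 : lam < 1) (hβ : 0 < β ^ 2)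
    (hδ0 : 0 < δ) (hδ1 : δ < 1)
    (hconv : ConvexOn ℝ (Set.Ico 0 1) C) (hmono : MonotoneOn C (Set.Ico 0 1))
    (hC0 : C 0 = 0) (hCnn : ∀ η ∈ Set.Ico (0 : ℝ) 1, 0 ≤ C η)
    (hdiv : Filter.Tendsto C (nhdsWithin 1 (Set.Iio 1)) Filter.atTop)
    (hr00 : 0 < r0) (hr01 : r0 < 1)
    (V : ℝ → ℝ)
    (hV : ∀ s : ℝ, V s = sSup ((fun η => η * s ^ 2 - C η) '' Set.Ico 0 1))
    (rbar : ℕ → ℝ) (hrbar0 : rbar 0 = r0)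
    (hrbarS : ∀ t, rbar (t + 1) = Phi lam β (rbar t)) :
    (∀ K σ η r : ℕ → ℝ,
        (∀ t, 0 < K t) → (∀ t, 0 < σ t) →
        (∀ t, η t ∈ Set.Ico (0 : ℝ) 1) →
        r 0 = r0 → (∀ t, r (t + 1) = Psi lam β (r t) (K t) (η t) (σ t)) →
        (∑' t : ℕ, δ ^ t * (η t * (r t) ^ 2 - C (η t)))
          ≤ ∑' t : ℕ, δ ^ t * V (rbar t)) ∧
    (∀ ηs : ℕ → ℝ,
        (∀ t, ηs t ∈ Set.Ico (0 : ℝ) 1) →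
        (∀ t, IsGreatest ((fun η => η * (rbar t) ^ 2 - C η) '' Set.Ico 0 1)
          (ηs t * (rbar t) ^ 2 - C (ηs t))) →
        (∀ r : ℕ → ℝ, r 0 = r0 →
          (∀ t, r (t + 1) = Psi lam β (r t)
            ((1 - (rbar t) ^ 2) / (2 * (1 - (rbar t) ^ 2) + β ^ 2))
            (ηs t) (rbar t)) →
          ∀ t, r t = rbar t) ∧
        (∑' t : ℕ, δ ^ t * (ηs t * (rbar t) ^ 2 - C (ηs t)))
          = ∑' t : ℕ, δ ^ t * V (rbar t)) := by
  have hrb : ∀ t, 0 < rbar t ∧ rbar t < 1 := by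
    intro t
    induction t with
    | zero => rw [hrbar0]; exact ⟨hr00, hr01⟩
    | succ n ih => rw [hrbarS]; exact phi_mem lam β (rbar n) hlam0 hlam1 hβ ih.1 ih.2
  have hVle : ∀ s η', η' ∈ Set.Ico (0:ℝ) 1 → η' * s^2 - C η' ≤ V s := by
    intro s η' hmem
    rw [hV]
    refine le_csSup ⟨s^2, ?_⟩ ⟨η', hmem, rfl⟩
    rintro x ⟨y, hy, rfl⟩
    have h1 := hCnn y hy
    have h2 : 0 ≤ (1 - y) * s^2 := mul_nonneg (by linarith [hy.2]) (sq_nonneg s)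
    simp only
    nlinarith
  have hV0 : ∀ s, 0 ≤ V s := by
    intro s
    have := hVle s 0 ⟨le_refl 0, one_pos⟩
    simpa [hC0] using this
  have hVub : ∀ s, s^2 ≤ 1 → V s ≤ 1 := by
    intro s hs
    rw [hV]
    refine csSup_le ⟨_, ⟨0, ⟨le_refl 0, one_pos⟩, rfl⟩⟩ ?_
    rintro x ⟨y, hy, rfl⟩
    have h1 := hCnn y hy
    have h2 : 0 ≤ (1 - y) * s^2 := mul_nonneg (by linarith [hy.2]) (sq_nonneg s)
    simp only
    nlinarith
  have hsumR : Summable (fun t => δ ^ t * V (rbar t)) := by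
    refine Summable.of_nonneg_of_le
      (fun t => mul_nonneg (pow_nonneg hδ0.le t) (hV0 _)) (fun t => ?_)
      (summable_geometric_of_lt_one hδ0.le hδ1)
    have h1 : (rbar t)^2 ≤ 1 := by nlinarith [(hrb t).1, (hrb t).2]
    calc δ ^ t * V (rbar t) ≤ δ ^ t * 1 :=
          mul_le_mul_of_nonneg_left (hVub _ h1) (pow_nonneg hδ0.le t)
      _ = δ ^ t := mul_one _
  constructor
  · intro K σ η r hK hσ hη hr0' hrS
    have hrle : ∀ t, |r t| ≤ rbar t := by
      intro t
      induction t with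
      | zero => rw [hr0', hrbar0, abs_of_pos hr00]
      | succ n ih =>
        have hsq : (r n)^2 ≤ (rbar n)^2 := by
          nlinarith [sq_abs (r n), abs_nonneg (r n), ih]
        have h1 : (r n)^2 ≤ 1 := by nlinarith [(hrb n).1, (hrb n).2]
        rw [hrS, hrbarS]
        calc |Psi lam β (r n) (K n) (η n) (σ n)| ≤ Phi lam β (r n) :=
              psi_le_phi lam β (r n) (K n) (η n) (σ n) hlam0.le hβ (hK n) h1
                (hη n).1 (hη n).2.le
          _ ≤ Phi lam β (rbar n) := by
              refine phi_mono lam β (r n) (rbar n) hlam0.le hβ hsq ?_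
              nlinarith [(hrb n).1, (hrb n).2]
    have hterm : ∀ t, δ ^ t * (η t * (r t) ^ 2 - C (η t)) ≤ δ ^ t * V (rbar t) := by
      intro t
      have hsq : (r t)^2 ≤ (rbar t)^2 := by
        nlinarith [sq_abs (r t), abs_nonneg (r t), hrle t]
      have h1 : η t * (r t) ^ 2 - C (η t) ≤ η t * (rbar t) ^ 2 - C (η t) := by
        have := mul_nonneg (hη t).1 (sub_nonneg.mpr hsq)
        nlinarith
      exact mul_le_mul_of_nonneg_left (h1.trans (hVle (rbar t) (η t) (hη t)))
        (pow_nonneg hδ0.le t)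
    by_cases hs : Summable (fun t => δ ^ t * (η t * (r t) ^ 2 - C (η t)))
    · exact Summable.tsum_le_tsum hterm hs hsumR
    · rw [tsum_eq_zero_of_not_summable hs]
      exact tsum_nonneg (fun t => mul_nonneg (pow_nonneg hδ0.le t) (hV0 _))
  · intro ηs hηs htop
    constructor
    · intro r hr0' hrS t
      induction t with
      | zero => rw [hr0', hrbar0]
      | succ n ih =>
        rw [hrS, ih, hrbarS]
        exact psi_sep lam β (rbar n) (ηs n) hβ (hrb n).1 (hrb n).2
    · refine tsum_congr (fun t => ?_)
      congr 1
      rw [hV]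
      exact ((htop t).csSup_eq).symm
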